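/- Let G = D_{2k₁} × D_{2k₂} × ... × D_{2kₜ} be a direct product of dihedral groups of orders 2k_i with each k_i odd, and suppose (k₁+1)(k₂+1)···(kₜ+1) − 2·k₁k₂···kₜ < 0. Then G does not admit an abelian partition. -/

import Mathlib

/-- An abelian partition of a group `G`: a family of `n` pairwise disjoint sets covering `G`,
each of size at least 2 and consisting of pairwise commuting elements. -/
def IsAbelianPartition {G : Type*} [Group G] {n : ℕ} (A : Fin n → Set G) : Prop :=
  (∀ i, 2 ≤ (A i).ncard) ∧ (⋃ i, A i) = Set.univ ∧
    Pairwise (Function.onFun Disjoint A) ∧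
    ∀ i, ∀ x ∈ A i, ∀ y ∈ A i, x * y = y * x

/-- The minimal number of parts in an abelian partition of `G` (0 if none exists). -/
noncomputable def apDegree (G : Type*) [Group G] : ℕ :=
  sInf {n | ∃ A : Fin n → Set G, IsAbelianPartition A}

/-- The maximal size of a noncommuting subset of `G`. -/
noncomputable def maxNoncommuting (G : Type*) [Group G] : ℕ :=
  sSup {k | ∃ S : Set G, S.ncard = k ∧ ∀ x ∈ S, ∀ y ∈ S, x ≠ y → x * y ≠ y * x}

private lemma odd_two_cancel {m : ℕ} (hm : Odd m) (x : ZMod m) (hx : x + x = 0) : x = 0 := by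
  obtain ⟨c, hc⟩ := hm
  have h1 : ((2 * c + 2 : ℕ) : ZMod m) = 1 := by
    have h2 : (2 * c + 2 : ℕ) = m + 1 := by omega
    rw [h2]
    push_cast [ZMod.natCast_self]
    ring
  calc x = ((2 * c + 2 : ℕ) : ZMod m) * x := by rw [h1, one_mul]
    _ = ((c + 1 : ℕ) : ZMod m) * (x + x) := by push_cast; ring
    _ = 0 := by rw [hx, mul_zero]

private lemma sr_centralizer {m : ℕ} (hm : Odd m) (a : ZMod m) (y : DihedralGroup m)
    (hy : y * DihedralGroup.sr a = DihedralGroup.sr a * y) :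
    y = 1 ∨ y = DihedralGroup.sr a := by
  cases y with
  | r b =>
    left
    rw [DihedralGroup.r_mul_sr, DihedralGroup.sr_mul_r] at hy
    have hb : a - b = a + b := by simpa using hy
    have : b = 0 := odd_two_cancel hm b (by linear_combination -hb)
    rw [this, DihedralGroup.one_def]
  | sr b =>
    right
    rw [DihedralGroup.sr_mul_sr, DihedralGroup.sr_mul_sr] at hy
    have hb : a - b = b - a := by simpa using hy
    have : b - a = 0 := odd_two_cancel hm (b - a) (by linear_combination -hb)
    have : b = a := by linear_combination this
    rw [this]

theorem product_of_dihedral_groups_NAP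
    (t : ℕ) (k : Fin t → ℕ) (hk : ∀ i, Odd (k i))
    (h : ∏ i, (k i + 1) < 2 * ∏ i, k i) :
    ¬ ∃ (n : ℕ) (A : Fin n → Set (∀ i, DihedralGroup (k i))), IsAbelianPartition A := by
  classical
  rintro ⟨n, A, hcard, hcover, hdisj, hcomm⟩
  haveI : ∀ i, NeZero (k i) := fun i => ⟨(hk i).pos.ne'⟩
  set xmap : (∀ i, ZMod (k i)) → (∀ i, DihedralGroup (k i)) :=
    fun v i => DihedralGroup.sr (v i) with hxmap
  have xinj : Function.Injective xmap := by
    intro v w hvw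
    funext i
    have := congrFun hvw i
    simpa [hxmap] using this
  have hmem : ∀ v, ∃ i, xmap v ∈ A i := by
    intro v
    have : xmap v ∈ ⋃ i, A i := hcover ▸ Set.mem_univ _
    exact Set.mem_iUnion.mp this
  choose idx hidx using hmem
  have hmate : ∀ v, ∃ y ∈ A (idx v), y ≠ xmap v := by
    intro v
    exact Set.exists_ne_of_one_lt_ncard (by have := hcard (idx v); omega) _
  choose mate hmateA hmateNe using hmate
  -- each component of the mate is 1 or sr (v i)
  have hcomp : ∀ v i, mate v i = 1 ∨ mate v i = DihedralGroup.sr (v i) := by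
    intro v i
    have hc := hcomm (idx v) _ (hmateA v) _ (hidx v)
    have hci := congrFun hc i
    exact sr_centralizer (hk i) (v i) (mate v i) (by simpa [hxmap] using hci)
  -- distinct diagonal involutions do not commute, so idx is injective
  have idxinj : Function.Injective idx := by
    intro v w hvw
    by_contra hne
    obtain ⟨j, hj⟩ := Function.ne_iff.mp hne
    have hc := hcomm (idx v) _ (hidx v) _ (hvw ▸ hidx w)
    have hcj := congrFun hc j
    simp only [hxmap, Pi.mul_apply, DihedralGroup.sr_mul_sr, DihedralGroup.r.injEq] at hcj
    have : v j - w j = 0 := odd_two_cancel (hk j) _ (by linear_combination -hcj)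
    exact hj (by linear_combination this)
  have mateinj : Function.Injective mate := by
    intro v w hvw
    by_contra hne
    have hij : idx v ≠ idx w := fun hh => hne (idxinj hh)
    exact Set.disjoint_left.mp (hdisj hij) (hmateA v) (hvw ▸ hmateA w)
  -- counting
  let S : ∀ i, Finset (DihedralGroup (k i)) :=
    fun i => insert 1 (Finset.univ.image DihedralGroup.sr)
  have srinj : ∀ i : Fin t, Function.Injective (DihedralGroup.sr (n := k i)) := by
    intro i a b hab
    simpa using hab
  have hScard : ∀ i, (S i).card = k i + 1 := by
    intro i
    rw [Finset.card_insert_of_notMem (by simp [DihedralGroup.one_def, -DihedralGroup.r_zero]),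
      Finset.card_image_of_injective _ (srinj i)]
    simp [ZMod.card]
  let T := Fintype.piFinset S
  let X := Finset.univ.image xmap
  have hXT : X ⊆ T := by
    intro g hg
    simp only [X, Finset.mem_image] at hg
    obtain ⟨v, -, rfl⟩ := hg
    rw [Fintype.mem_piFinset]
    intro i
    simp [S, hxmap]
  have hmateM : ∀ v, mate v ∈ T \ X := by
    intro v
    rw [Finset.mem_sdiff]
    constructor
    · rw [Fintype.mem_piFinset]
      intro i
      rcases hcomp v i with h1 | h1 <;> simp [S, h1]
    · simp only [X, Finset.mem_image, Finset.mem_univ, true_and, not_exists]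
      intro w hw
      apply hmateNe v
      have hvw : w = v := by
        funext i
        have hwi := congrFun hw i
        rcases hcomp v i with h1 | h1
        · rw [h1, hxmap] at hwi
          simp [DihedralGroup.one_def, -DihedralGroup.r_zero] at hwi
        · rw [h1, hxmap] at hwi
          simpa using hwi
      rw [← hw, hvw]
  have hle : Fintype.card (∀ i, ZMod (k i)) ≤ (T \ X).card :=
    Finset.card_le_card_of_injOn mate (fun v _ => hmateM v) mateinj.injOn
  have hDcard : Fintype.card (∀ i, ZMod (k i)) = ∏ i, k i := by
    simp [Fintype.card_pi, ZMod.card]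
  have hTcard : T.card = ∏ i, (k i + 1) := by
    rw [Fintype.card_piFinset]
    exact Finset.prod_congr rfl fun i _ => hScard i
  have hXcard : X.card = ∏ i, k i := by
    rw [Finset.card_image_of_injective _ xinj, ← hDcard]
    simp
  have hsub : (T \ X).card = T.card - X.card := Finset.card_sdiff_of_subset hXT
  have hXleT : X.card ≤ T.card := Finset.card_le_card hXT
  rw [hDcard, hsub, hTcard, hXcard] at hle
  rw [hTcard, hXcard] at hXleT
  omega
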